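/- arXiv:gr-qc/0407094 — 4 statements merged into one kernel-verified Lean document; each statement's English description precedes it below -/
import Mathlib

section
/- For a globally hyperbolic poset X, the set of maximal elements of the interval domain IX, with the relative Scott topology, is homeomorphic to X with the interval topology. -/
open Set

/-- `a` is way below `x`. -/
def wayBelow {α : Type*} [Preorder α] (a x : α) : Prop :=
  ∀ S : Set α, S.Nonempty → DirectedOn (· ≤ ·) S → ∀ d, IsLUB S d → x ≤ d →
    ∃ s ∈ S, a ≤ s

/-- A poset is continuous if every element is the supremum of a directed set
of elements way below it. -/
def ContinuousPoset (α : Type*) [Preorder α] : Prop :=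
  ∀ x : α, ∃ S : Set α, S ⊆ {a | wayBelow a x} ∧ S.Nonempty ∧
    DirectedOn (· ≤ ·) S ∧ IsLUB S x

/-- A basis for a continuous poset. -/
def PosetBasis {α : Type*} [Preorder α] (B : Set α) : Prop :=
  ∀ x : α, ∃ S : Set α, S ⊆ B ∩ {a | wayBelow a x} ∧ S.Nonempty ∧
    DirectedOn (· ≤ ·) S ∧ IsLUB S x

/-- Scott open sets: upper sets inaccessible by directed suprema. -/
def ScottOpen {α : Type*} [Preorder α] (U : Set α) : Prop :=
  IsUpperSet U ∧ ∀ S : Set α, S.Nonempty → DirectedOn (· ≤ ·) S → ∀ d, IsLUB S d →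
    d ∈ U → (S ∩ U).Nonempty

/-- The Scott topology. -/
def scottTop (α : Type*) [Preorder α] : TopologicalSpace α :=
  TopologicalSpace.generateFrom {U | ScottOpen U}

/-- A bicontinuous poset. -/
def Bicontinuous (α : Type*) [Preorder α] : Prop :=
  ContinuousPoset α ∧
  (∀ x y : α, wayBelow x y ↔
    ∀ S : Set α, S.Nonempty → DirectedOn (· ≥ ·) S → ∀ i, IsGLB S i → i ≤ x →
      ∃ s ∈ S, s ≤ y) ∧
  (∀ x : α, DirectedOn (· ≥ ·) {y | wayBelow x y} ∧ IsGLB {y | wayBelow x y} x)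

/-- The basic open intervals `(a,b) = {x | a ≪ x ≪ b}`. -/
def intervalBasis (α : Type*) [Preorder α] : Set (Set α) :=
  {s | ∃ a b : α, s = {x | wayBelow a x ∧ wayBelow x b}}

/-- The interval topology, generated by the sets `(a,b)`. -/
def intervalTop (α : Type*) [Preorder α] : TopologicalSpace α :=
  TopologicalSpace.generateFrom (intervalBasis α)

/-- A globally hyperbolic poset: bicontinuous, with compact closed intervals. -/
def GloballyHyperbolic (α : Type*) [PartialOrder α] : Prop :=
  Bicontinuous α ∧ ∀ a b : α, @IsCompact α (intervalTop α) (Set.Icc a b)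

/-- The poset of closed intervals `[a,b]`, `a ≤ b`, under reverse inclusion. -/
def IX (α : Type*) [PartialOrder α] := {p : α × α // p.1 ≤ p.2}

instance IX.instPartialOrder {α : Type*} [PartialOrder α] : PartialOrder (IX α) where
  le x y := x.1.1 ≤ y.1.1 ∧ y.1.2 ≤ x.1.2
  le_refl x := ⟨le_refl _, le_refl _⟩
  le_trans x y z h1 h2 := ⟨h1.1.trans h2.1, h2.2.trans h1.2⟩
  le_antisymm x y h1 h2 :=
    Subtype.ext (Prod.ext_iff.mpr ⟨le_antisymm h1.1 h2.1, le_antisymm h2.2 h1.2⟩)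

section Rel

variable {β : Type*}

/-- Directedness with respect to an arbitrary relation. -/
def relDirectedOn (r : β → β → Prop) (S : Set β) : Prop :=
  ∀ x ∈ S, ∀ y ∈ S, ∃ z ∈ S, r x z ∧ r y z

/-- Least upper bound with respect to an arbitrary relation. -/
def relIsLUB (r : β → β → Prop) (S : Set β) (d : β) : Prop :=
  (∀ s ∈ S, r s d) ∧ ∀ u, (∀ s ∈ S, r s u) → r d u

/-- The way-below relation with respect to an arbitrary relation. -/
def relWayBelow (r : β → β → Prop) (a x : β) : Prop :=
  ∀ S : Set β, S.Nonempty → relDirectedOn r S → ∀ d, relIsLUB r S d → r x d →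
    ∃ s ∈ S, r a s

/-- An abstract basis: a transitive relation, interpolative from the `-` direction. -/
def AbstractBasis (r : β → β → Prop) : Prop :=
  Transitive r ∧ ∀ (F : Finset β) (x : β), (∀ y ∈ F, r y x) →
    ∃ z, (∀ y ∈ F, r y z) ∧ r z x

/-- Interpolation in the `+` direction. -/
def PlusInterpolative (r : β → β → Prop) : Prop :=
  ∀ (F : Finset β) (x : β), (∀ y ∈ F, r x y) → ∃ z, r x z ∧ (∀ y ∈ F, r z y)

/-- An ideal: a nonempty directed lower set. -/
def IsIdeal (r : β → β → Prop) (I : Set β) : Prop :=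
  I.Nonempty ∧ (∀ x y, r x y → y ∈ I → x ∈ I) ∧
    ∀ x ∈ I, ∀ y ∈ I, ∃ z ∈ I, r x z ∧ r y z

/-- The ideal completion: ideals ordered by inclusion. -/
def IdealCompletion (r : β → β → Prop) := {I : Set β // IsIdeal r I}

instance IdealCompletion.instPartialOrder {β : Type*} (r : β → β → Prop) :
    PartialOrder (IdealCompletion r) where
  le I J := I.1 ⊆ J.1
  le_refl I := subset_rfl
  le_trans I J K h1 h2 := Set.Subset.trans h1 h2
  le_antisymm I J h1 h2 := Subtype.ext (Set.Subset.antisymm h1 h2)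

end Rel

/-- The order on maximal elements induced by interval endpoints. -/
def maxLe {α : Type*} (left right : α → α) (a b : α) : Prop :=
  ∃ x, left x = a ∧ right x = b

/-- An interval poset. -/
structure IntervalPoset (α : Type*) [PartialOrder α] where
  left : α → α
  right : α → α
  left_max : ∀ x, IsMax (left x)
  right_max : ∀ x, IsMax (right x)
  glb : ∀ x, IsGLB {left x, right x} x
  glue : ∀ x y, right x = left y →
    ∃ z, IsGLB {x, y} z ∧ left z = left x ∧ right z = right y
  sub_left : ∀ x p, IsMax p → x ≤ p →
    ∃ z, IsGLB {left x, p} z ∧ left z = left x ∧ right z = p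
  sub_right : ∀ x p, IsMax p → x ≤ p →
    ∃ z, IsGLB {p, right x} z ∧ left z = p ∧ right z = right x

/-- An interval domain. -/
structure IntervalDomain (α : Type*) [PartialOrder α] extends IntervalPoset α where
  dcpo : ∀ S : Set α, S.Nonempty → DirectedOn (· ≤ ·) S → ∃ d, IsLUB S d
  cont : ContinuousPoset α
  ax1 : ∀ x p, IsMax p → wayBelow x p →
    (∀ z, IsGLB {left x, p} z → ∃ u, wayBelow z u) ∧
    (∀ z, IsGLB {p, right x} z → ∃ u, wayBelow z u)
  ax2b : ∀ x : α, (∃ u, wayBelow x u) ↔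
    (∀ y, left y = left x → y ≤ x →
      relWayBelow (fun u v => u ≤ v ∧ right u = right y ∧ right v = right y) y (right y))
  ax2c : ∀ x : α, (∃ u, wayBelow x u) ↔
    (∀ y, right y = right x → y ≤ x →
      relWayBelow (fun u v => u ≤ v ∧ left u = left y ∧ left v = left y) y (left y))
  ax3a : ∀ (p : α) (S : Set α), S.Nonempty → S ⊆ {z | left z = p} →
    DirectedOn (· ≤ ·) S → ∀ u, IsLUB S u →
      left u = p ∧ ∀ (q : α) (T : Set α), T.Nonempty → T ⊆ {z | left z = q} →
        DirectedOn (· ≤ ·) T → ∀ v, IsLUB T v → right '' T = right '' S →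
          right u = right v
  ax3b : ∀ (q : α) (S : Set α), S.Nonempty → S ⊆ {z | right z = q} →
    DirectedOn (· ≤ ·) S → ∀ u, IsLUB S u →
      right u = q ∧ ∀ (p : α) (T : Set α), T.Nonempty → T ⊆ {z | right z = p} →
        DirectedOn (· ≤ ·) T → ∀ v, IsLUB T v → left '' T = left '' S →
          left u = left v
  ax4 : ∀ x : α, @IsCompact α (scottTop α) ({y | x ≤ y} ∩ {y | IsMax y})

section Aux

open Filter TopologicalSpace Topology

/-! ### Basic way-below lemmas over a preorder -/

section Pre
variable {β : Type*} [Preorder β]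

lemma wayBelow_le' {a x : β} (h : wayBelow a x) : a ≤ x := by
  obtain ⟨s, hs, hle⟩ := h {x} ⟨x, rfl⟩
    (fun u hu v hv => ⟨x, rfl, le_of_eq hu, le_of_eq hv⟩) x isLUB_singleton le_rfl
  exact hle.trans (le_of_eq hs)

lemma wayBelow_mono_right {a x y : β} (h : wayBelow a x) (hxy : x ≤ y) : wayBelow a y :=
  fun S hS hd d hlub hyd => h S hS hd d hlub (hxy.trans hyd)

lemma wayBelow_mono_left {a' a x : β} (hle : a' ≤ a) (h : wayBelow a x) : wayBelow a' x := by
  intro S hS hd d hlub hxd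
  obtain ⟨s, hs, h2⟩ := h S hS hd d hlub hxd
  exact ⟨s, hs, hle.trans h2⟩

lemma wayBelow_set_props (cont : ContinuousPoset β) (x : β) :
    IsLUB {a | wayBelow a x} x ∧ DirectedOn (· ≤ ·) {a | wayBelow a x} ∧
      ({a | wayBelow a x}).Nonempty := by
  obtain ⟨S, hSsub, hSne, hSdir, hSlub⟩ := cont x
  refine ⟨⟨fun a ha => wayBelow_le' ha, fun u hu => hSlub.2 (fun s hs => hu (hSsub hs))⟩,
    ?_, hSne.mono hSsub⟩
  intro a ha b hb
  obtain ⟨s₁, hs₁, ha₁⟩ := ha S hSne hSdir x hSlub le_rfl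
  obtain ⟨s₂, hs₂, hb₂⟩ := hb S hSne hSdir x hSlub le_rfl
  obtain ⟨s, hs, h1, h2⟩ := hSdir s₁ hs₁ s₂ hs₂
  exact ⟨s, hSsub hs, ha₁.trans h1, hb₂.trans h2⟩

lemma wayBelow_interpolate (cont : ContinuousPoset β) {a x : β} (h : wayBelow a x) :
    ∃ c, wayBelow a c ∧ wayBelow c x := by
  obtain ⟨hlubx, hdirx, hnex⟩ := wayBelow_set_props cont x
  set D : Set β := {d | ∃ c, wayBelow c x ∧ wayBelow d c} with hD
  have hDne : D.Nonempty := by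
    obtain ⟨c, hc⟩ := hnex
    obtain ⟨_, _, hne⟩ := wayBelow_set_props cont c
    obtain ⟨d, hd⟩ := hne
    exact ⟨d, c, hc, hd⟩
  have hDdir : DirectedOn (· ≤ ·) D := by
    rintro d₁ ⟨c₁, hc₁, hd₁⟩ d₂ ⟨c₂, hc₂, hd₂⟩
    obtain ⟨c, hc, h1, h2⟩ := hdirx c₁ hc₁ c₂ hc₂
    obtain ⟨Sc, hsub, hne, hdir, hlub⟩ := cont c
    obtain ⟨s₁, hs₁, hd₁'⟩ := (wayBelow_mono_right hd₁ h1) Sc hne hdir c hlub le_rfl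
    obtain ⟨s₂, hs₂, hd₂'⟩ := (wayBelow_mono_right hd₂ h2) Sc hne hdir c hlub le_rfl
    obtain ⟨s, hs, hs1, hs2⟩ := hdir s₁ hs₁ s₂ hs₂
    exact ⟨s, ⟨c, hc, hsub hs⟩, hd₁'.trans hs1, hd₂'.trans hs2⟩
  have hDlub : IsLUB D x := by
    constructor
    · rintro d ⟨c, hc, hd⟩
      exact (wayBelow_le' hd).trans (wayBelow_le' hc)
    · intro u hu
      refine hlubx.2 (fun c hc => ?_)
      obtain ⟨Sc, hsub, hne, hdir, hlub⟩ := cont c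
      exact hlub.2 (fun s hs => hu ⟨c, hc, hsub hs⟩)
  obtain ⟨d, ⟨c, hcx, hdc⟩, had⟩ := h D hDne hDdir x hDlub le_rfl
  exact ⟨c, wayBelow_mono_left had hdc, hcx⟩

end Pre

/-! ### Lemmas using bicontinuity -/

section Bicont
variable {α : Type*} [PartialOrder α]

lemma wayAbove_nonempty (hb : Bicontinuous α) (x : α) : {y | wayBelow x y}.Nonempty := by
  by_contra hne
  rw [Set.not_nonempty_iff_eq_empty] at hne
  have hglb := (hb.2.2 x).2
  rw [hne] at hglb
  have htop : ∀ z : α, z ≤ x := fun z => hglb.2 (by simp [lowerBounds])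
  have : wayBelow x x := (hb.2.1 x x).2 (fun S hS _ i _ _ => ⟨hS.choose, hS.choose_spec, htop _⟩)
  have : x ∈ {y | wayBelow x y} := this
  rw [hne] at this
  exact this

lemma dual_wayBelow_iff (hb : Bicontinuous α) (a x : α) :
    wayBelow (α := αᵒᵈ) (OrderDual.toDual a) (OrderDual.toDual x) ↔ wayBelow x a :=
  ((hb.2.1 x a).symm : _)

lemma continuousPoset_dual (hb : Bicontinuous α) : ContinuousPoset αᵒᵈ := by
  intro x
  refine ⟨{y : α | wayBelow (OrderDual.ofDual x) y}, ?_, wayAbove_nonempty hb _,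
    (hb.2.2 (OrderDual.ofDual x)).1, ?_⟩
  · intro y hy
    exact (dual_wayBelow_iff hb y (OrderDual.ofDual x)).2 hy
  · exact ((hb.2.2 (OrderDual.ofDual x)).2 : _)

lemma wayBelow_interpolate' (hb : Bicontinuous α) {x b : α} (h : wayBelow x b) :
    ∃ c, wayBelow x c ∧ wayBelow c b := by
  have h' : wayBelow (α := αᵒᵈ) (OrderDual.toDual b) (OrderDual.toDual x) :=
    (dual_wayBelow_iff hb b x).2 h
  obtain ⟨c, h1, h2⟩ := wayBelow_interpolate (continuousPoset_dual hb) h'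
  exact ⟨OrderDual.ofDual c, (dual_wayBelow_iff hb c x).1 h2,
    (dual_wayBelow_iff hb b c).1 h1⟩

/-! ### Interval topology lemmas -/

lemma intervalBasis_isOpen (a b : α) :
    IsOpen[intervalTop α] {x | wayBelow a x ∧ wayBelow x b} :=
  TopologicalSpace.GenerateOpen.basic _ ⟨a, b, rfl⟩

lemma intervalTop_isOpen_of (U : Set α)
    (h : ∀ x ∈ U, ∃ a b, (wayBelow a x ∧ wayBelow x b) ∧
      {y | wayBelow a y ∧ wayBelow y b} ⊆ U) :
    IsOpen[intervalTop α] U := by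
  letI := intervalTop α
  rw [isOpen_iff_forall_mem_open]
  intro x hx
  obtain ⟨a, b, hx', hsub⟩ := h x hx
  exact ⟨_, hsub, intervalBasis_isOpen a b, hx'⟩

lemma isClosed_Ici' (hb : Bicontinuous α) (c : α) :
    IsClosed[intervalTop α] (Set.Ici c) := by
  letI := intervalTop α
  rw [← isOpen_compl_iff]
  apply intervalTop_isOpen_of
  intro z hz
  have hb' : ∃ b', wayBelow z b' ∧ ¬ c ≤ b' := by
    by_contra hcon
    push_neg at hcon
    exact hz ((hb.2.2 z).2.2 (fun y hy => hcon y hy) : c ≤ z)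
  obtain ⟨b', hzb', hcb'⟩ := hb'
  obtain ⟨_, _, ⟨a', ha'⟩⟩ := wayBelow_set_props hb.1 z
  refine ⟨a', b', ⟨ha', hzb'⟩, ?_⟩
  rintro y ⟨_, hyb'⟩ (hcy : c ≤ y)
  exact hcb' (hcy.trans (wayBelow_le' hyb'))

lemma isClosed_Iic' (hb : Bicontinuous α) (c : α) :
    IsClosed[intervalTop α] (Set.Iic c) := by
  letI := intervalTop α
  rw [← isOpen_compl_iff]
  apply intervalTop_isOpen_of
  intro z hz
  have ha' : ∃ a', wayBelow a' z ∧ ¬ a' ≤ c := by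
    by_contra hcon
    push_neg at hcon
    exact hz ((wayBelow_set_props hb.1 z).1.2 (fun a ha => hcon a ha) : z ≤ c)
  obtain ⟨a', ha'z, ha'c⟩ := ha'
  obtain ⟨b', hb'⟩ := wayAbove_nonempty hb z
  refine ⟨a', b', ⟨ha'z, hb'⟩, ?_⟩
  rintro y ⟨ha'y, _⟩ (hyc : y ≤ c)
  exact ha'c ((wayBelow_le' ha'y).trans hyc)

lemma isClosed_le_graph (hb : Bicontinuous α) :
    IsClosed[@instTopologicalSpaceProd α α (intervalTop α) (intervalTop α)]
      {p : α × α | p.1 ≤ p.2} := by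
  letI := intervalTop α
  rw [← isOpen_compl_iff, isOpen_prod_iff]
  intro u v huv
  replace huv : ¬ u ≤ v := huv
  have hB : ∃ b', wayBelow v b' ∧ ¬ u ≤ b' := by
    by_contra hcon
    push_neg at hcon
    exact huv ((hb.2.2 v).2.2 (fun y hy => hcon y hy))
  obtain ⟨b', hvb', hub'⟩ := hB
  have hA : ∃ a', wayBelow a' u ∧ ¬ a' ≤ b' := by
    by_contra hcon
    push_neg at hcon
    exact hub' ((wayBelow_set_props hb.1 u).1.2 (fun a ha => hcon a ha))
  obtain ⟨a', ha'u, ha'b'⟩ := hA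
  obtain ⟨β', hβ'⟩ := wayAbove_nonempty hb u
  obtain ⟨_, _, ⟨γ', hγ'⟩⟩ := wayBelow_set_props hb.1 v
  refine ⟨{w | wayBelow a' w ∧ wayBelow w β'}, {w | wayBelow γ' w ∧ wayBelow w b'},
    intervalBasis_isOpen _ _, intervalBasis_isOpen _ _, ⟨ha'u, hβ'⟩, ⟨hγ', hvb'⟩, ?_⟩
  rintro ⟨p, q⟩ ⟨⟨hp, _⟩, ⟨_, hq⟩⟩ (hpq : p ≤ q)
  exact ha'b' ((wayBelow_le' hp).trans (hpq.trans (wayBelow_le' hq)))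

end Bicont
end Aux
section Aux2

open Filter TopologicalSpace Topology

variable {α : Type*} [PartialOrder α]

lemma IX.le_def {m n : IX α} : m ≤ n ↔ m.1.1 ≤ n.1.1 ∧ n.1.2 ≤ m.1.2 := Iff.rfl

lemma IX.isMax_iff (m : IX α) : IsMax m ↔ m.1.1 = m.1.2 := by
  constructor
  · intro hmax
    have h1 : m ≤ ⟨(m.1.1, m.1.1), le_rfl⟩ := ⟨le_rfl, m.2⟩
    exact le_antisymm m.2 (hmax h1).2
  · intro heq b hb
    refine ⟨b.2.trans (hb.2.trans heq.symm.le), (heq ▸ hb.1 : m.1.2 ≤ b.1.1).trans b.2⟩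

lemma scottOpen_isOpen {β : Type*} [Preorder β] {U : Set β} (h : ScottOpen U) :
    IsOpen[scottTop β] U :=
  TopologicalSpace.GenerateOpen.basic _ h

/-- The key lemma: if `S` is directed in `IX α` with lub `m`, then elements way below
`m.1.1` (resp. way above `m.1.2`) are eventually below left endpoints (resp. above
right endpoints) in `S`. -/
lemma IX.key (h : GloballyHyperbolic α) {S : Set (IX α)} (hne : S.Nonempty)
    (hdir : DirectedOn (· ≤ ·) S) {m : IX α} (hlub : IsLUB S m) :
    (∀ a', wayBelow a' m.1.1 → ∃ s ∈ S, a' ≤ s.1.1) ∧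
    (∀ b', wayBelow m.1.2 b' → ∃ s ∈ S, s.1.2 ≤ b') := by
  letI : TopologicalSpace α := intervalTop α
  obtain ⟨s₀, hs₀⟩ := hne
  haveI : Nonempty S := ⟨⟨s₀, hs₀⟩⟩
  haveI hSd : IsDirected S (· ≤ ·) := by
    constructor
    intro x y
    obtain ⟨z, hz, h1, h2⟩ := hdir x.1 x.2 y.1 y.2
    exact ⟨⟨z, hz⟩, h1, h2⟩
  haveI : (atTop : Filter S).NeBot := atTop_neBot_iff.2 ⟨‹_›, ‹_›⟩
  set net : S → α × α := fun s => (s.1.1.1, s.1.1.2) with hnet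
  set F : Filter (α × α) := Filter.map net atTop with hF
  set K : Set (α × α) := Set.Icc s₀.1.1 s₀.1.2 ×ˢ Set.Icc s₀.1.1 s₀.1.2 with hK
  have hFK : F ≤ Filter.principal K := by
    rw [Filter.le_principal_iff, Filter.mem_map]
    filter_upwards [Filter.eventually_ge_atTop (⟨s₀, hs₀⟩ : S)] with s hs
    obtain ⟨h1, h2⟩ := (hs : s₀ ≤ s.1)
    exact ⟨⟨h1, s.1.2.trans h2⟩, ⟨h1.trans s.1.2, h2⟩⟩
  have hKcomp : IsCompact K := (h.2 _ _).prod (h.2 _ _)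
  obtain ⟨⟨x, y⟩, hxyK, hcl⟩ := hKcomp hFK
  -- cluster point lies in every closed set eventually containing the net
  have mem_closed : ∀ C : Set (α × α), IsClosed C → (∀ᶠ s in atTop, net s ∈ C) →
      (x, y) ∈ C := by
    intro C hC hev
    have hCF : C ∈ F := Filter.mem_map.2 (hev.mono (fun s hs => hs))
    have := hcl.mono (Filter.le_principal_iff.2 hCF)
    have hclos : (x, y) ∈ closure C := mem_closure_iff_clusterPt.2 this
    rwa [hC.closure_eq] at hclos
  have hub1 : ∀ s ∈ S, s.1.1 ≤ x := by
    intro s hs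
    have := mem_closed (Set.Ici s.1.1 ×ˢ Set.univ)
      ((isClosed_Ici' h.1 _).prod isClosed_univ)
      (by filter_upwards [Filter.eventually_ge_atTop (⟨s, hs⟩ : S)] with t ht
          exact ⟨(ht : s ≤ t.1).1, Set.mem_univ _⟩)
    exact this.1
  have hub2 : ∀ s ∈ S, y ≤ s.1.2 := by
    intro s hs
    have := mem_closed (Set.univ ×ˢ Set.Iic s.1.2)
      (isClosed_univ.prod (isClosed_Iic' h.1 _))
      (by filter_upwards [Filter.eventually_ge_atTop (⟨s, hs⟩ : S)] with t ht
          exact ⟨Set.mem_univ _, (ht : s ≤ t.1).2⟩)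
    exact this.2
  have hxy : x ≤ y := by
    have := mem_closed {p | p.1 ≤ p.2} (isClosed_le_graph h.1)
      (Filter.Eventually.of_forall (fun s => s.1.2))
    exact this
  have hub : (⟨(x, y), hxy⟩ : IX α) ∈ upperBounds S := fun s hs => ⟨hub1 s hs, hub2 s hs⟩
  have hmle : m ≤ ⟨(x, y), hxy⟩ := hlub.2 hub
  have frequent : ∀ W : Set (α × α), IsOpen W → (x, y) ∈ W → ∃ s : S, net s ∈ W := by
    intro W hW hmem
    have hWn : W ∈ nhds (x, y) := hW.mem_nhds hmem
    have hrange : Set.range net ∈ F := Filter.range_mem_map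
    have hne' : (W ∩ Set.range net).Nonempty := by
      have : W ∩ Set.range net ∈ nhds (x, y) ⊓ F :=
        Filter.inter_mem (Filter.mem_inf_of_left hWn) (Filter.mem_inf_of_right hrange)
      exact hcl.nonempty_of_mem this
    obtain ⟨p, hpW, s, rfl⟩ := hne'
    exact ⟨s, hpW⟩
  constructor
  · intro a' ha'
    have hax : wayBelow a' x := wayBelow_mono_right ha' hmle.1
    obtain ⟨b', hb'⟩ := wayAbove_nonempty h.1 x
    obtain ⟨s, hs⟩ := frequent ({z | wayBelow a' z ∧ wayBelow z b'} ×ˢ Set.univ)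
      ((intervalBasis_isOpen a' b').prod isOpen_univ) ⟨⟨hax, hb'⟩, Set.mem_univ _⟩
    exact ⟨s.1, s.2, wayBelow_le' hs.1.1⟩
  · intro b' hb'
    have hyb : wayBelow y b' := wayBelow_mono_left hmle.2 hb'
    obtain ⟨_, _, ⟨a'', ha''⟩⟩ := wayBelow_set_props h.1.1 y
    obtain ⟨s, hs⟩ := frequent (Set.univ ×ˢ {z | wayBelow a'' z ∧ wayBelow z b'})
      (isOpen_univ.prod (intervalBasis_isOpen a'' b')) ⟨Set.mem_univ _, ⟨ha'', hyb⟩⟩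
    exact ⟨s.1, s.2, wayBelow_le' hs.2.2⟩

/-- The basic Scott-open sets of `IX α`. -/
lemma IX.V_scottOpen (h : GloballyHyperbolic α) (a b : α) :
    ScottOpen {m : IX α | wayBelow a m.1.1 ∧ wayBelow m.1.2 b} := by
  constructor
  · rintro m n hmn ⟨h1, h2⟩
    exact ⟨wayBelow_mono_right h1 hmn.1, wayBelow_mono_left hmn.2 h2⟩
  · rintro S hS hdir d hlub ⟨h1, h2⟩
    obtain ⟨a₂, ha₂, ha₂'⟩ := wayBelow_interpolate h.1.1 h1
    obtain ⟨b₂, hb₂, hb₂'⟩ := wayBelow_interpolate' h.1 h2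
    obtain ⟨s₁, hs₁, hs₁'⟩ := (IX.key h hS hdir hlub).1 a₂ ha₂'
    obtain ⟨s₂, hs₂, hs₂'⟩ := (IX.key h hS hdir hlub).2 b₂ hb₂
    obtain ⟨s, hs, hss₁, hss₂⟩ := hdir s₁ hs₁ s₂ hs₂
    refine ⟨s, hs, wayBelow_mono_right ha₂ (hs₁'.trans hss₁.1), ?_⟩
    exact wayBelow_mono_left (hss₂.2.trans hs₂') hb₂'

/-- Approximating directed family of `[x,x]` in `IX α`. -/
lemma IX.e_approx (h : GloballyHyperbolic α) (x : α) :
    ∃ D : Set (IX α), D.Nonempty ∧ DirectedOn (· ≤ ·) D ∧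
      IsLUB D ⟨(x, x), le_rfl⟩ ∧ ∀ p ∈ D, wayBelow p.1.1 x ∧ wayBelow x p.1.2 := by
  obtain ⟨hlubS, hdirS, hneS⟩ := wayBelow_set_props h.1.1 x
  have hdirT := (h.1.2.2 x).1
  have hglbT := (h.1.2.2 x).2
  have hneT := wayAbove_nonempty h.1 x
  set D : Set (IX α) := {m | wayBelow m.1.1 x ∧ wayBelow x m.1.2} with hD
  obtain ⟨a₀, ha₀⟩ := hneS
  obtain ⟨b₀, hb₀⟩ := hneT
  refine ⟨D, ⟨⟨(a₀, b₀), (wayBelow_le' ha₀).trans (wayBelow_le' hb₀)⟩, ha₀, hb₀⟩, ?_, ?_, ?_⟩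
  · rintro p ⟨hp1, hp2⟩ q ⟨hq1, hq2⟩
    obtain ⟨a, ha, hpa, hqa⟩ := hdirS p.1.1 hp1 q.1.1 hq1
    obtain ⟨b, hb, hpb, hqb⟩ := hdirT p.1.2 hp2 q.1.2 hq2
    exact ⟨⟨(a, b), (wayBelow_le' ha).trans (wayBelow_le' hb)⟩, ⟨ha, hb⟩,
      ⟨hpa, hpb⟩, ⟨hqa, hqb⟩⟩
  · constructor
    · rintro p ⟨hp1, hp2⟩
      exact ⟨wayBelow_le' hp1, wayBelow_le' hp2⟩
    · rintro ⟨⟨c, d⟩, hcd⟩ hub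
      have hxc : x ≤ c := by
        refine hlubS.2 (fun a ha => ?_)
        have hmem : (⟨(a, b₀), (wayBelow_le' ha).trans (wayBelow_le' hb₀)⟩ : IX α) ∈ D :=
          ⟨ha, hb₀⟩
        exact (hub hmem).1
      have hdx : d ≤ x := by
        refine hglbT.2 (fun b hb => ?_)
        have hmem : (⟨(a₀, b), (wayBelow_le' ha₀).trans (wayBelow_le' hb)⟩ : IX α) ∈ D :=
          ⟨ha₀, hb⟩
        exact (hub hmem).2
      exact ⟨hxc, hdx⟩
  · exact fun p hp => hp

end Aux2
section Aux3

open Filter TopologicalSpace Topology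

variable {α : Type*} [PartialOrder α]

lemma IX.e_cont (h : GloballyHyperbolic α) :
    Continuous[intervalTop α, scottTop (IX α)]
      (fun x : α => (⟨(x, x), le_rfl⟩ : IX α)) := by
  refine continuous_generateFrom_iff.mpr ?_
  intro U hU
  replace hU : ScottOpen U := hU
  apply intervalTop_isOpen_of
  intro x hx
  obtain ⟨D, hDne, hDdir, hDlub, hDwb⟩ := IX.e_approx h x
  obtain ⟨p, hpD, hpU⟩ := hU.2 D hDne hDdir _ hDlub hx
  refine ⟨p.1.1, p.1.2, hDwb p hpD, ?_⟩
  rintro y ⟨h1, h2⟩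
  exact hU.1 (⟨wayBelow_le' h1, wayBelow_le' h2⟩ : p ≤ ⟨(y, y), le_rfl⟩) hpU

end Aux3

/-- the maximal elements of `IX` with the relative Scott topology are
homeomorphic to `X` with the interval topology. -/
theorem max_IX_homeomorphic {α : Type*} [PartialOrder α]
    (h : GloballyHyperbolic α) :
    letI : TopologicalSpace (IX α) := scottTop (IX α)
    letI : TopologicalSpace α := intervalTop α
    Nonempty ({m : IX α // IsMax m} ≃ₜ α) := by
  letI : TopologicalSpace (IX α) := scottTop (IX α)
  letI : TopologicalSpace α := intervalTop α
  refine ⟨?_⟩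
  refine
    { toFun := fun m => m.1.1.1
      invFun := fun x => ⟨⟨(x, x), le_rfl⟩, (IX.isMax_iff _).2 rfl⟩
      left_inv := ?_
      right_inv := fun x => rfl
      continuous_toFun := ?_
      continuous_invFun := ?_ }
  · rintro ⟨m, hm⟩
    have heq : m.1.1 = m.1.2 := (IX.isMax_iff m).1 hm
    apply Subtype.ext
    apply Subtype.ext
    exact Prod.ext rfl heq
  · refine continuous_generateFrom_iff.mpr ?_
    rintro s ⟨a, b, rfl⟩
    rw [isOpen_induced_iff]
    refine ⟨{m : IX α | wayBelow a m.1.1 ∧ wayBelow m.1.2 b},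
      scottOpen_isOpen (IX.V_scottOpen h a b), ?_⟩
    ext ⟨m, hm⟩
    have heq : m.1.1 = m.1.2 := (IX.isMax_iff m).1 hm
    simp only [Set.mem_preimage, Set.mem_setOf_eq]
    rw [← heq]
  · exact (IX.e_cont h).subtype_mk _
end

section
/- If (C, ≪) is an abstract basis that is interpolative in both directions, then the set int(C) = {(a,b) : a ≪ b} with relation (a,b) ≪ (c,d) iff a ≪ c and d ≪ b is an abstract basis. -/
open Set

/-- the intervals of a `±`-interpolative abstract basis form an
abstract basis. -/
theorem int_abstractBasis {β : Type*} (r : β → β → Prop)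
    (h1 : AbstractBasis r) (h2 : PlusInterpolative r) :
    AbstractBasis (fun p q : {p : β × β // r p.1 p.2} =>
      r p.1.1 q.1.1 ∧ r q.1.2 p.1.2) := by
  classical
  obtain ⟨htr, hint⟩ := h1
  constructor
  · intro p q s hpq hqs
    exact ⟨htr hpq.1 hqs.1, htr hqs.2 hpq.2⟩
  · intro F x hF
    obtain ⟨c, hc, hcx⟩ := hint (F.image (fun p => p.1.1)) x.1.1 (by
      intro y hy
      obtain ⟨p, hp, rfl⟩ := Finset.mem_image.mp hy
      exact (hF p hp).1)
    obtain ⟨d, hxd, hd⟩ := h2 (F.image (fun p => p.1.2)) x.1.2 (by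
      intro y hy
      obtain ⟨p, hp, rfl⟩ := Finset.mem_image.mp hy
      exact (hF p hp).2)
    have hcd : r c d := htr hcx (htr x.2 hxd)
    refine ⟨⟨(c, d), hcd⟩, ?_, hcx, hxd⟩
    intro p hp
    exact ⟨hc _ (Finset.mem_image.mpr ⟨p, hp, rfl⟩),
      hd _ (Finset.mem_image.mpr ⟨p, hp, rfl⟩)⟩
end

section
/- In an interval poset D, the relation a ≤ b on max(D) defined by: a ≤ b iff there is x ∈ D with left(x) = a and right(x) = b, is a partial order. -/
open Set

/-- in an interval poset, the endpoint relation `≤` is a partial order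
on the maximal elements. -/
theorem maxLe_partialOrder {α : Type*} [PartialOrder α] (D : IntervalPoset α) :
    (∀ a : α, IsMax a → maxLe D.left D.right a a) ∧
    (∀ a b : α, maxLe D.left D.right a b → maxLe D.left D.right b a → a = b) ∧
    (∀ a b c : α, maxLe D.left D.right a b → maxLe D.left D.right b c →
      maxLe D.left D.right a c) := by
  have hfix : ∀ a : α, IsMax a → D.left a = a ∧ D.right a = a := by
    intro a ha
    have h := D.glb a
    have h1 : a ≤ D.left a := h.1 (by simp)
    have h2 : a ≤ D.right a := h.1 (by simp)
    exact ⟨le_antisymm (ha h1) h1, le_antisymm (ha h2) h2⟩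
  refine ⟨?_, ?_, ?_⟩
  · intro a ha
    exact ⟨a, (hfix a ha).1, (hfix a ha).2⟩
  · rintro a b ⟨x, hxl, hxr⟩ ⟨y, hyl, hyr⟩
    obtain ⟨z, hz, hzl, hzr⟩ := D.glue x y (hxr.trans hyl.symm)
    have hza : z = a := by
      have hg := D.glb z
      rw [hzl, hzr, hxl, hyr] at hg
      simp only [Set.pair_eq_singleton] at hg
      exact hg.unique isGLB_singleton
    have hzx : z ≤ x := hz.1 (by simp)
    have hxa : x ≤ a := by
      have := (D.glb x).1 (show D.left x ∈ _ by simp)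
      rwa [hxl] at this
    have hax : x = a := le_antisymm hxa (hza ▸ hzx)
    have ha : IsMax a := hxl ▸ D.left_max x
    rw [← hxr, hax, (hfix a ha).2]
  · rintro a b c ⟨x, hxl, hxr⟩ ⟨y, hyl, hyr⟩
    obtain ⟨z, _, hzl, hzr⟩ := D.glue x y (hxr.trans hyl.symm)
    exact ⟨z, hzl.trans hxl, hzr.trans hyr⟩
end

section
/- Every interval poset D is order-isomorphic to the poset of closed intervals of (max(D), ≤) ordered by reverse inclusion, via x ↦ [left(x), right(x)]; in particular x ⊑ y in D iff left(x) ≤ left(y) ≤ right(y) ≤ right(x). -/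
open Set

/-- an interval poset is order-isomorphic to the closed intervals of
`(max D, ≤)` under reverse inclusion, via `x ↦ [left x, right x]`. -/
theorem intervalPoset_iso {α : Type*} [PartialOrder α] (D : IntervalPoset α) :
    (∀ x y : α, x ≤ y ↔
      (maxLe D.left D.right (D.left x) (D.left y) ∧
       maxLe D.left D.right (D.left y) (D.right y) ∧
       maxLe D.left D.right (D.right y) (D.right x))) ∧
    (∀ x y : α, D.left x = D.left y → D.right x = D.right y → x = y) ∧
    (∀ a b : α, maxLe D.left D.right a b → ∃ x : α, D.left x = a ∧ D.right x = b) := by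
  have hinj : ∀ x y : α, D.left x = D.left y → D.right x = D.right y → x = y := by
    intro x y hl hr
    have h1 := D.glb x
    have h2 := D.glb y
    rw [hl, hr] at h1
    exact h1.unique h2
  have hle_l : ∀ x : α, x ≤ D.left x := fun x => (D.glb x).1 (Set.mem_insert _ _)
  have hle_r : ∀ x : α, x ≤ D.right x :=
    fun x => (D.glb x).1 (Set.mem_insert_of_mem _ rfl)
  refine ⟨?_, hinj, ?_⟩
  · intro x y
    constructor
    · intro hxy
      refine ⟨?_, ⟨y, rfl, rfl⟩, ?_⟩
      · obtain ⟨z, _, hzl, hzr⟩ :=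
          D.sub_left x (D.left y) (D.left_max y) (hxy.trans (hle_l y))
        exact ⟨z, hzl, hzr⟩
      · obtain ⟨z, _, hzl, hzr⟩ :=
          D.sub_right x (D.right y) (D.right_max y) (hxy.trans (hle_r y))
        exact ⟨z, hzl, hzr⟩
    · rintro ⟨⟨u, hul, hur⟩, -, ⟨w, hwl, hwr⟩⟩
      obtain ⟨z, hz, hzl, hzr⟩ := D.glue u y hur
      obtain ⟨t, ht, htl, htr⟩ := D.glue z w (hzr.trans hwl.symm)
      have htx : t = x := hinj t x (htl.trans hzl |>.trans hul) (htr.trans hwr)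
      have hty : t ≤ y := le_trans (ht.1 (Set.mem_insert _ _))
        (hz.1 (Set.mem_insert_of_mem _ rfl))
      exact htx ▸ hty
  · rintro a b ⟨x, hx⟩
    exact ⟨x, hx⟩
end
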